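/- The orbit space ℂ³/T², endowed with the quotient topology, is homeomorphic to ℝ⁴. -/

import Mathlib

/-- The action of `(θ, φ) ∈ T²` on `ℂ³`,
`(e^{iθ}, e^{iφ})·(z₁,z₂,z₃) = (e^{iθ}z₁, e^{iφ}z₂, e^{−i(θ+φ)}z₃)`. -/
noncomputable def torusAct (θ φ : ℝ) (z : ℂ × ℂ × ℂ) : ℂ × ℂ × ℂ :=
  (Complex.exp (θ * Complex.I) * z.1,
   Complex.exp (φ * Complex.I) * z.2.1,
   Complex.exp (-(θ + φ) * Complex.I) * z.2.2)

/-- The orbit equivalence relation of the `T²`-action on `ℂ³`. -/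
noncomputable def torusSetoid : Setoid (ℂ × ℂ × ℂ) where
  r z w := ∃ θ φ : ℝ, w = torusAct θ φ z
  iseqv := by
    constructor
    · exact fun z => ⟨0, 0, by simp [torusAct]⟩
    · rintro z w ⟨θ, φ, rfl⟩
      refine ⟨-θ, -φ, ?_⟩
      refine Prod.ext ?_ (Prod.ext ?_ ?_) <;>
        · simp only [torusAct, ← mul_assoc, ← Complex.exp_add]
          push_cast
          ring_nf
          simp
    · rintro z w v ⟨θ, φ, rfl⟩ ⟨θ', φ', rfl⟩
      refine ⟨θ + θ', φ + φ', ?_⟩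
      refine Prod.ext ?_ (Prod.ext ?_ ?_) <;>
        · simp only [torusAct, ← mul_assoc, ← Complex.exp_add]
          push_cast
          ring_nf


open Complex

/-- The invariant map `z ↦ (|z₁|²−|z₃|², |z₂|²−|z₃|², Re(z₁z₂z₃), Im(z₁z₂z₃))`. -/
noncomputable def Pmap (z : ℂ × ℂ × ℂ) : Fin 4 → ℝ :=
  ![Complex.normSq z.1 - Complex.normSq z.2.2,
    Complex.normSq z.2.1 - Complex.normSq z.2.2,
    (z.1 * z.2.1 * z.2.2).re,
    (z.1 * z.2.1 * z.2.2).im]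

lemma continuous_Pmap : Continuous Pmap := by
  apply continuous_pi
  intro i
  fin_cases i <;> · simp only [Pmap, Complex.normSq_apply]
                    norm_num
                    fun_prop

lemma normSq_exp_of_re_eq_zero {w : ℂ} (h : w.re = 0) : normSq (Complex.exp w) = 1 := by
  rw [Complex.normSq_eq_norm_sq, Complex.norm_exp, h, Real.exp_zero]; norm_num

lemma exp_triple (θ φ : ℝ) :
    Complex.exp ((θ : ℂ) * I) * Complex.exp ((φ : ℂ) * I) * Complex.exp (-((θ : ℂ) + φ) * I) = 1 := by
  rw [← Complex.exp_add, ← Complex.exp_add, ← Complex.exp_zero]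
  congr 1
  ring

lemma Pmap_torusAct (θ φ : ℝ) (z : ℂ × ℂ × ℂ) : Pmap (torusAct θ φ z) = Pmap z := by
  have h1 : normSq (Complex.exp ((θ : ℂ) * I) * z.1) = normSq z.1 := by
    rw [Complex.normSq_mul, normSq_exp_of_re_eq_zero (by simp), one_mul]
  have h2 : normSq (Complex.exp ((φ : ℂ) * I) * z.2.1) = normSq z.2.1 := by
    rw [Complex.normSq_mul, normSq_exp_of_re_eq_zero (by simp), one_mul]
  have h3 : normSq (Complex.exp (-((θ : ℂ) + φ) * I) * z.2.2) = normSq z.2.2 := by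
    rw [Complex.normSq_mul, normSq_exp_of_re_eq_zero (by simp), one_mul]
  have h4 : (Complex.exp ((θ : ℂ) * I) * z.1) * (Complex.exp ((φ : ℂ) * I) * z.2.1) *
      (Complex.exp (-((θ : ℂ) + φ) * I) * z.2.2) = z.1 * z.2.1 * z.2.2 := by
    rw [show (Complex.exp ((θ : ℂ) * I) * z.1) * (Complex.exp ((φ : ℂ) * I) * z.2.1) *
      (Complex.exp (-((θ : ℂ) + φ) * I) * z.2.2)
      = (Complex.exp ((θ : ℂ) * I) * Complex.exp ((φ : ℂ) * I) * Complex.exp (-((θ : ℂ) + φ) * I))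
        * (z.1 * z.2.1 * z.2.2) from by ring, exp_triple, one_mul]
  unfold Pmap torusAct
  rw [h1, h2, h3, h4]

lemma cubic_lt {a b t t' : ℝ} (ht : 0 ≤ t) (hta : 0 ≤ t + a) (htb : 0 ≤ t + b)
    (hlt : t < t') : t * (t + a) * (t + b) < t' * (t' + a) * (t' + b) := by
  have p1 : 0 < t' + a := lt_of_le_of_lt hta (by linarith)
  have p2 : 0 < t' + b := lt_of_le_of_lt htb (by linarith)
  have q : (t + a) * (t + b) ≤ (t' + a) * (t' + b) := by nlinarith
  have step1 : t * ((t + a) * (t + b)) ≤ t * ((t' + a) * (t' + b)) :=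
    mul_le_mul_of_nonneg_left q ht
  have step2 : t * ((t' + a) * (t' + b)) < t' * ((t' + a) * (t' + b)) :=
    mul_lt_mul_of_pos_right hlt (mul_pos p1 p2)
  nlinarith [step1, step2]

lemma cubic_unique {a b t t' : ℝ} (ht : 0 ≤ t) (hta : 0 ≤ t + a) (htb : 0 ≤ t + b)
    (ht' : 0 ≤ t') (hta' : 0 ≤ t' + a) (htb' : 0 ≤ t' + b)
    (h : t * (t + a) * (t + b) = t' * (t' + a) * (t' + b)) : t = t' := by
  rcases lt_trichotomy t t' with hlt | he | hgt
  · exact absurd h (ne_of_lt (cubic_lt ht hta htb hlt))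
  · exact he
  · exact absurd h.symm (ne_of_lt (cubic_lt ht' hta' htb' hgt))

lemma abs_eq_of_normSq_eq {u v : ℂ} (h : normSq u = normSq v) :
    ‖u‖ = ‖v‖ := by
  rw [Complex.norm_def, Complex.norm_def, h]

lemma phase_exists {u v : ℂ} (h : normSq u = normSq v) :
    ∃ θ : ℝ, v = Complex.exp ((θ : ℂ) * I) * u := by
  rcases eq_or_ne u 0 with rfl | hu
  · refine ⟨0, ?_⟩
    have : normSq v = 0 := by simpa using h.symm
    rw [Complex.normSq_eq_zero] at this
    simp [this]
  · refine ⟨(v / u).arg, ?_⟩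
    have habs : ‖v / u‖ = 1 := by
      rw [norm_div, ← abs_eq_of_normSq_eq h, div_self]
      simpa using hu
    have h2 := Complex.norm_mul_exp_arg_mul_I (v / u)
    rw [habs] at h2
    push_cast at h2
    rw [one_mul] at h2
    rw [h2, div_mul_cancel₀ _ hu]

lemma orbit_of_invariants {z1 z2 z3 w1 w2 w3 : ℂ}
    (h1 : normSq z1 = normSq w1) (h2 : normSq z2 = normSq w2) (h3 : normSq z3 = normSq w3)
    (hp : z1 * z2 * z3 = w1 * w2 * w3) :
    ∃ θ φ : ℝ, w1 = Complex.exp ((θ : ℂ) * I) * z1 ∧ w2 = Complex.exp ((φ : ℂ) * I) * z2 ∧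
      w3 = Complex.exp (-((θ : ℂ) + φ) * I) * z3 := by
  obtain ⟨α, hα⟩ := phase_exists h1
  obtain ⟨β, hβ⟩ := phase_exists h2
  obtain ⟨γ, hγ⟩ := phase_exists h3
  rcases eq_or_ne z3 0 with hz3 | hz3
  · refine ⟨α, β, hα, hβ, ?_⟩
    rw [hz3] at hγ ⊢
    rw [mul_zero] at hγ ⊢
    exact hγ
  rcases eq_or_ne z1 0 with hz1 | hz1
  · refine ⟨-γ - β, β, ?_, hβ, ?_⟩
    · rw [hz1] at hα ⊢
      rw [mul_zero] at hα ⊢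
      exact hα
    · rw [hγ]
      congr 2
      push_cast
      ring
  rcases eq_or_ne z2 0 with hz2 | hz2
  · refine ⟨α, -γ - α, hα, ?_, ?_⟩
    · rw [hz2] at hβ ⊢
      rw [mul_zero] at hβ ⊢
      exact hβ
    · rw [hγ]
      congr 2
      push_cast
      ring
  · refine ⟨α, β, hα, hβ, ?_⟩
    have hE := exp_triple α β
    have key : z1 * z2 * w3 = z1 * z2 * (Complex.exp (-((α : ℂ) + β) * I) * z3) := by
      calc z1 * z2 * w3
          = (Complex.exp ((α : ℂ) * I) * Complex.exp ((β : ℂ) * I) *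
              Complex.exp (-((α : ℂ) + β) * I)) * (z1 * z2 * w3) := by rw [hE, one_mul]
        _ = Complex.exp (-((α : ℂ) + β) * I) *
              (Complex.exp ((α : ℂ) * I) * z1 * (Complex.exp ((β : ℂ) * I) * z2) * w3) := by ring
        _ = Complex.exp (-((α : ℂ) + β) * I) * (w1 * w2 * w3) := by rw [← hα, ← hβ]
        _ = Complex.exp (-((α : ℂ) + β) * I) * (z1 * z2 * z3) := by rw [← hp]
        _ = z1 * z2 * (Complex.exp (-((α : ℂ) + β) * I) * z3) := by ring
    exact mul_left_cancel₀ (mul_ne_zero hz1 hz2) key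

lemma Pmap_inj {z w : ℂ × ℂ × ℂ} (hP : Pmap z = Pmap w) :
    ∃ θ φ : ℝ, w = torusAct θ φ z := by
  have e0 := congrFun hP 0
  have e1 := congrFun hP 1
  have e2 := congrFun hP 2
  have e3 := congrFun hP 3
  simp only [Pmap, Matrix.cons_val_zero, Matrix.cons_val_one, Matrix.head_cons,
    Matrix.cons_val_two, Matrix.tail_cons, Matrix.cons_val_three] at e0 e1 e2 e3
  have hprod : z.1 * z.2.1 * z.2.2 = w.1 * w.2.1 * w.2.2 := Complex.ext e2 e3
  have hns : normSq z.1 * normSq z.2.1 * normSq z.2.2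
      = normSq w.1 * normSq w.2.1 * normSq w.2.2 := by
    have := congrArg normSq hprod
    simpa [map_mul] using this
  have h3 : normSq z.2.2 = normSq w.2.2 := by
    apply cubic_unique (a := normSq z.1 - normSq z.2.2) (b := normSq z.2.1 - normSq z.2.2)
      (normSq_nonneg _) (by simpa using normSq_nonneg z.1) (by simpa using normSq_nonneg z.2.1)
      (normSq_nonneg _)
    · rw [show normSq w.2.2 + (normSq z.1 - normSq z.2.2) = normSq w.1 from by linarith]
      exact normSq_nonneg _
    · rw [show normSq w.2.2 + (normSq z.2.1 - normSq z.2.2) = normSq w.2.1 from by linarith]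
      exact normSq_nonneg _
    · rw [show normSq w.2.2 + (normSq z.1 - normSq z.2.2) = normSq w.1 from by linarith,
        show normSq w.2.2 + (normSq z.2.1 - normSq z.2.2) = normSq w.2.1 from by linarith]
      ring_nf
      ring_nf at hns
      linarith
  have h1 : normSq z.1 = normSq w.1 := by linarith
  have h2 : normSq z.2.1 = normSq w.2.1 := by linarith
  obtain ⟨θ, φ, ha, hb, hc⟩ := orbit_of_invariants h1 h2 h3 hprod
  exact ⟨θ, φ, Prod.ext ha (Prod.ext hb hc)⟩

lemma Pmap_surj : Function.Surjective Pmap := by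
  intro p
  set a := p 0 with ha
  set b := p 1 with hb
  set w : ℂ := ⟨p 2, p 3⟩ with hw
  set c := normSq w with hc
  have hc0 : 0 ≤ c := normSq_nonneg w
  set t0 := max 0 (max (-a) (-b)) with ht0
  have ht00 : 0 ≤ t0 := le_max_left _ _
  have ht0a : 0 ≤ t0 + a := by
    have : -a ≤ t0 := le_trans (le_max_left _ _) (le_max_right _ _); linarith
  have ht0b : 0 ≤ t0 + b := by
    have : -b ≤ t0 := le_trans (le_max_right _ _) (le_max_right _ _); linarith
  have hft0 : t0 * (t0 + a) * (t0 + b) = 0 := by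
    rcases max_choice 0 (max (-a) (-b)) with h | h
    · rw [← ht0] at h; rw [h]; ring
    · rw [← ht0] at h
      rcases max_choice (-a) (-b) with h' | h'
      · rw [h'] at h; rw [h]; ring
      · rw [h'] at h; rw [h]; ring
  set T := t0 + c + 1 with hT
  have hfT : c ≤ T * (T + a) * (T + b) := by
    have h1 : c + 1 ≤ T := by linarith
    have h2 : c + 1 ≤ T + a := by linarith
    have h3 : c + 1 ≤ T + b := by linarith
    calc c ≤ (c + 1) * (c + 1) * (c + 1) := by nlinarith
      _ ≤ T * (T + a) * (T + b) := by gcongr <;> nlinarith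
  have hcont : ContinuousOn (fun t => t * (t + a) * (t + b)) (Set.Icc t0 T) := by fun_prop
  have hmem : c ∈ Set.Icc ((fun t => t * (t + a) * (t + b)) t0)
      ((fun t => t * (t + a) * (t + b)) T) := by
    simp only [hft0]
    exact ⟨hc0, hfT⟩
  obtain ⟨t, htmem, hft⟩ := intermediate_value_Icc (by nlinarith : t0 ≤ T) hcont hmem
  have ht : 0 ≤ t := le_trans ht00 htmem.1
  have hta : 0 ≤ t + a := by have := htmem.1; linarith
  have htb : 0 ≤ t + b := by have := htmem.1; linarith
  simp only at hft
  -- hft : t * (t + a) * (t + b) = c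
  by_cases hr : t * (t + b) = 0
  · -- degenerate case: w = 0
    have hcz : c = 0 := by
      rw [← hft, show t * (t + a) * (t + b) = (t * (t + b)) * (t + a) from by ring, hr, zero_mul]
    have hw0 : w = 0 := by rwa [hc, normSq_eq_zero] at hcz
    have hp2 : p 2 = 0 := by
      have := congrArg Complex.re hw0; simpa [hw] using this
    have hp3 : p 3 = 0 := by
      have := congrArg Complex.im hw0; simpa [hw] using this
    refine ⟨((Real.sqrt (t + a) : ℂ), (Real.sqrt (t + b) : ℂ), (Real.sqrt t : ℂ)), ?_⟩
    have h23 : Real.sqrt (t + b) * Real.sqrt t = 0 := by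
      rcases mul_eq_zero.1 hr with h | h
      · rw [h, Real.sqrt_zero, mul_zero]
      · rw [h, Real.sqrt_zero, zero_mul]
    funext i
    fin_cases i <;>
      simp only [Pmap, Matrix.cons_val_zero, Matrix.cons_val_one, Matrix.head_cons,
        Matrix.cons_val_two, Matrix.tail_cons, Matrix.cons_val_three, normSq_ofReal]
    · rw [Real.mul_self_sqrt hta, Real.mul_self_sqrt ht]; ring_nf; exact ha.symm ▸ rfl
    · rw [Real.mul_self_sqrt htb, Real.mul_self_sqrt ht]; ring_nf; exact hb.symm ▸ rfl
    · push_cast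
      rw [show ((Real.sqrt (t+a) : ℂ) * (Real.sqrt (t+b) : ℂ) * (Real.sqrt t : ℂ))
        = ((Real.sqrt (t+a) * (Real.sqrt (t+b) * Real.sqrt t) : ℝ) : ℂ) from by push_cast; ring]
      rw [h23]
      simp [hp2]
    · push_cast
      rw [show ((Real.sqrt (t+a) : ℂ) * (Real.sqrt (t+b) : ℂ) * (Real.sqrt t : ℂ))
        = ((Real.sqrt (t+a) * (Real.sqrt (t+b) * Real.sqrt t) : ℝ) : ℂ) from by push_cast; ring]
      simp [hp3]
  · -- generic case
    have htpos : t ≠ 0 := fun h => hr (by rw [h, zero_mul])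
    have htbpos : t + b ≠ 0 := fun h => hr (by rw [h, mul_zero])
    have hr2 : Real.sqrt (t + b) ≠ 0 :=
      Real.sqrt_ne_zero'.mpr (lt_of_le_of_ne htb (Ne.symm htbpos))
    have hr3 : Real.sqrt t ≠ 0 :=
      Real.sqrt_ne_zero'.mpr (lt_of_le_of_ne ht (Ne.symm htpos))
    refine ⟨(w / ((Real.sqrt (t + b) : ℂ) * (Real.sqrt t : ℂ)),
      (Real.sqrt (t + b) : ℂ), (Real.sqrt t : ℂ)), ?_⟩
    have hden : ((Real.sqrt (t + b) : ℂ) * (Real.sqrt t : ℂ)) ≠ 0 :=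
      mul_ne_zero (by exact_mod_cast hr2) (by exact_mod_cast hr3)
    have hnsden : normSq ((Real.sqrt (t + b) : ℂ) * (Real.sqrt t : ℂ)) = (t + b) * t := by
      rw [normSq_mul, normSq_ofReal, normSq_ofReal, Real.mul_self_sqrt htb, Real.mul_self_sqrt ht]
    have hprodw : w / ((Real.sqrt (t + b) : ℂ) * (Real.sqrt t : ℂ)) *
        (Real.sqrt (t + b) : ℂ) * (Real.sqrt t : ℂ) = w := by
      rw [mul_assoc, div_mul_cancel₀ _ hden]
    funext i
    fin_cases i <;>
      simp only [Pmap, Matrix.cons_val_zero, Matrix.cons_val_one, Matrix.head_cons,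
        Matrix.cons_val_two, Matrix.tail_cons, Matrix.cons_val_three, normSq_ofReal]
    · rw [normSq_div, hnsden, ← hc, ← hft, Real.mul_self_sqrt ht]
      simp only [Fin.zero_eta, Matrix.cons_val_zero, ← ha]
      field_simp
      ring
    · rw [Real.mul_self_sqrt htb, Real.mul_self_sqrt ht]; ring_nf; exact hb.symm ▸ rfl
    · rw [hprodw]
      rfl
    · rw [hprodw]
      rfl

lemma Pmap_proper : IsProperMap Pmap := by
  rw [isProperMap_iff_isCompact_preimage]
  refine ⟨continuous_Pmap, fun K hK => ?_⟩
  obtain ⟨R₀, hR⟩ := hK.isBounded.subset_closedBall 0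
  set R := max R₀ 0 with hRdef
  have hR' : K ⊆ Metric.closedBall 0 R :=
    hR.trans (Metric.closedBall_subset_closedBall (le_max_left _ _))
  have hR0 : 0 ≤ R := le_max_right _ _
  set B := 2 * R ^ 2 + R + 1 with hBdef
  have hsub : Pmap ⁻¹' K ⊆ Metric.closedBall 0 (Real.sqrt (B + R)) := by
    intro z hz
    have hzK : Pmap z ∈ Metric.closedBall 0 R := hR' hz
    rw [Metric.mem_closedBall, dist_zero_right] at hzK
    have hb : ∀ i : Fin 4, |Pmap z i| ≤ R := fun i => by
      calc |Pmap z i| = ‖Pmap z i‖ := rfl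
        _ ≤ ‖Pmap z‖ := norm_le_pi_norm _ i
        _ ≤ R := hzK
    have hb0 := hb 0
    have hb1 := hb 1
    have hb2 := hb 2
    have hb3 := hb 3
    simp only [Pmap, Matrix.cons_val_zero, Matrix.cons_val_one, Matrix.head_cons,
      Matrix.cons_val_two, Matrix.tail_cons, Matrix.cons_val_three] at hb0 hb1 hb2 hb3
    set n1 := normSq z.1 with hn1
    set n2 := normSq z.2.1 with hn2
    set n3 := normSq z.2.2 with hn3
    have hn1' : 0 ≤ n1 := normSq_nonneg _
    have hn2' : 0 ≤ n2 := normSq_nonneg _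
    have hn3' : 0 ≤ n3 := normSq_nonneg _
    have hprod : n1 * n2 * n3 ≤ 2 * R ^ 2 := by
      have : n1 * n2 * n3 = normSq (z.1 * z.2.1 * z.2.2) := by
        rw [map_mul, map_mul]
      rw [this, normSq_apply]
      have h2 := abs_le.1 hb2
      have h3 := abs_le.1 hb3
      nlinarith [h2.1, h2.2, h3.1, h3.2]
    have hab0 := abs_le.1 hb0
    have hab1 := abs_le.1 hb1
    have hn3B : n3 ≤ B := by
      by_contra hcon
      push_neg at hcon
      have h1 : 1 ≤ n1 := by nlinarith
      have h2 : 1 ≤ n2 := by nlinarith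
      have h12 : 1 ≤ n1 * n2 := by nlinarith
      have h123 : 1 * n3 ≤ n1 * n2 * n3 := mul_le_mul_of_nonneg_right h12 hn3'
      rw [one_mul] at h123
      linarith
    have hn1B : n1 ≤ B + R := by nlinarith
    have hn2B : n2 ≤ B + R := by nlinarith
    have hn3B' : n3 ≤ B + R := by nlinarith
    rw [Metric.mem_closedBall, dist_zero_right]
    have key : ∀ u : ℂ, normSq u ≤ B + R → ‖u‖ ≤ Real.sqrt (B + R) := by
      intro u hu
      apply Real.le_sqrt_of_sq_le
      rw [Complex.sq_norm]
      exact hu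
    rw [Prod.norm_def, Prod.norm_def]
    exact max_le (key _ hn1B) (max_le (key _ hn2B) (key _ hn3B'))
  exact ((isCompact_closedBall _ _).of_isClosed_subset
    (hK.isClosed.preimage continuous_Pmap) hsub)

/-- The orbit space `ℂ³/T²` is homeomorphic to `ℝ⁴`. -/
theorem quotient_homeomorph_R4 :
    Nonempty (Quotient torusSetoid ≃ₜ (Fin 4 → ℝ)) := by
  have hlift : ∀ (a b : ℂ × ℂ × ℂ), torusSetoid.r a b → Pmap a = Pmap b := by
    rintro a b ⟨θ, φ, rfl⟩
    exact (Pmap_torusAct θ φ a).symm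
  set F : Quotient torusSetoid → (Fin 4 → ℝ) := Quotient.lift Pmap hlift with hF
  have hFmk : ∀ z, F (Quotient.mk torusSetoid z) = Pmap z := fun z => rfl
  have hinj : Function.Injective F := by
    intro x y
    induction x using Quotient.ind
    induction y using Quotient.ind
    intro h
    exact Quotient.sound (Pmap_inj h)
  have hsurjF : Function.Surjective F := by
    intro p
    obtain ⟨z, hz⟩ := Pmap_surj p
    exact ⟨Quotient.mk torusSetoid z, hz⟩
  have hbij : Function.Bijective F := ⟨hinj, hsurjF⟩
  have hcont : Continuous F := continuous_quot_lift _ continuous_Pmap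
  have hclosed : IsClosedMap F := by
    intro C hC
    have hCeq : F '' C = Pmap '' (Quotient.mk torusSetoid ⁻¹' C) := by
      have hmksurj : Function.Surjective (Quotient.mk torusSetoid) := fun q =>
        Quotient.inductionOn q (fun z => ⟨z, rfl⟩)
      conv_lhs => rw [← Set.image_preimage_eq C hmksurj]
      rw [← Set.image_comp]
      rfl
    rw [hCeq]
    exact Pmap_proper.isClosedMap _ (hC.preimage continuous_quotient_mk')
  have hopen : IsOpenMap F := by
    intro U hU
    have h1 : IsClosed (F '' Uᶜ) := hclosed _ hU.isClosed_compl
    rw [Set.image_compl_eq hbij] at h1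
    rwa [← isClosed_compl_iff]
  exact ⟨(Equiv.ofBijective F hbij).toHomeomorphOfContinuousOpen hcont hopen⟩
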